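/- arXiv:1012.4245 — 2 statements merged into one kernel-verified Lean document; each statement's English description precedes it below -/
import Mathlib

section
/- For every q > 0, every integer n ≥ 2, every integer m ≥ 0 and every x ∈ [0,1], the recurrence R_{n,q}(t^{m+1},x) = R_{n,q}(t^m,x) − (1−x) · ([n−1]_q/[n]_q)^m · R_{n−1,q}(t^m, v(q,x)) holds, where t^m denotes the monomial function t ↦ t^m on [0,1]. -/
open Finset Filter

noncomputable section

/-- The q-integer `[n]_q = 1 + q + ⋯ + q^(n-1)`. -/
def qInt (q : ℝ) (n : ℕ) : ℝ := ∑ i ∈ Finset.range n, q ^ i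

/-- The q-factorial `[n]_q!`. -/
def qFact (q : ℝ) : ℕ → ℝ
  | 0 => 1
  | n + 1 => qFact q n * qInt q (n + 1)

/-- The q-binomial coefficient `[n k]_q`. -/
def qBinom (q : ℝ) (n k : ℕ) : ℝ := qFact q n / (qFact q k * qFact q (n - k))

/-- The Lupaş basis function `b_{nk}(q;x)`. -/
def lupasB (q : ℝ) (n k : ℕ) (x : ℝ) : ℝ :=
  qBinom q n k * q ^ (k * (k - 1) / 2) * x ^ k * (1 - x) ^ (n - k) /
    ∏ j ∈ Finset.range (n - 1), (1 - x + q ^ (j + 1) * x)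

/-- The limit Lupaş basis function `b_{∞k}(q;x)` (for `0 < q < 1`, `x ∈ [0,1)`). -/
def lupasBInf (q : ℝ) (k : ℕ) (x : ℝ) : ℝ :=
  q ^ (k * (k - 1) / 2) * (x / (1 - x)) ^ k /
    ((1 - q) ^ k * qFact q k * ∏' j : ℕ, (1 + q ^ j * (x / (1 - x))))

/-- The Lupaş q-analogue of the Bernstein operator `R_{n,q}(f,x)`. -/
def lupasR (q : ℝ) (n : ℕ) (f : ℝ → ℝ) (x : ℝ) : ℝ :=
  ∑ k ∈ Finset.range (n + 1), f (qInt q k / qInt q n) * lupasB q n k x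

/-- The limit q-Lupaş operator `R_{∞,q}(f,x)` for `0 < q < 1`. -/
def lupasRInfLow (q : ℝ) (f : ℝ → ℝ) (x : ℝ) : ℝ :=
  if x = 1 then f 1 else ∑' k : ℕ, f (1 - q ^ k) * lupasBInf q k x

/-- The limit q-Lupaş operator `R_{∞,q}(f,x)`: for `q > 1` it is defined by
reflection, `R_{∞,q}(f,x) = R_{∞,1/q}(g,1-x)` with `g(x) = f(1-x)`. -/
def lupasRInf (q : ℝ) (f : ℝ → ℝ) (x : ℝ) : ℝ :=
  if 1 < q then lupasRInfLow (1 / q) (fun t => f (1 - t)) (1 - x)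
  else lupasRInfLow q f x

/-- The transform `v(q,x) = qx/(1-x+qx)`. -/
def vq (q x : ℝ) : ℝ := q * x / (1 - x + q * x)

/-- `L_{n,q}(f,x) = R_{n,q}(f,x) - R_{∞,q}(f,x)`. -/
def lupasL (q : ℝ) (n : ℕ) (f : ℝ → ℝ) (x : ℝ) : ℝ :=
  lupasR q n f x - lupasRInf q f x

/-- The modulus of continuity `ω(f,t)` of `f` on `[0,1]`. -/
def omega1 (f : ℝ → ℝ) (t : ℝ) : ℝ :=
  sSup {d | ∃ x ∈ Set.Icc (0:ℝ) 1, ∃ y ∈ Set.Icc (0:ℝ) 1, |x - y| ≤ t ∧ d = |f x - f y|}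

/-- The second modulus of smoothness `ω₂(f,t)` of `f` on `[0,1]`. -/
def omega2 (f : ℝ → ℝ) (t : ℝ) : ℝ :=
  sSup {d | ∃ h, 0 ≤ h ∧ h ≤ t ∧ ∃ x, 0 ≤ x ∧ x ≤ 1 - 2 * h ∧
    d = |f (x + 2 * h) - 2 * f (x + h) + f x|}
lemma qInt_pos {q : ℝ} (hq : 0 < q) {n : ℕ} (hn : 0 < n) : 0 < qInt q n := by
  unfold qInt
  exact Finset.sum_pos (fun i _ => pow_pos hq i) (Finset.nonempty_range_iff.mpr (by omega))

lemma qFact_pos {q : ℝ} (hq : 0 < q) (n : ℕ) : 0 < qFact q n := by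
  induction n with
  | zero => norm_num [qFact]
  | succ k ih => exact mul_pos ih (qInt_pos hq k.succ_pos)

lemma qInt_add (q : ℝ) (a b : ℕ) : qInt q (a + b) = qInt q a + q ^ a * qInt q b := by
  unfold qInt
  rw [Finset.sum_range_add, Finset.mul_sum]
  simp [pow_add]

lemma factor_pos {q x : ℝ} (hq : 0 < q) (hx : x ∈ Set.Icc (0:ℝ) 1) (j : ℕ) :
    0 < 1 - x + q ^ j * x := by
  obtain ⟨h0, h1⟩ := hx
  rcases eq_or_lt_of_le h0 with h | h
  · simp [← h]
  · have := pow_pos hq j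
    nlinarith

lemma qBinom_step {q : ℝ} (hq : 0 < q) {M k : ℕ} (hk : k ≤ M + 1) :
    qBinom q (M + 2) k * qInt q (M + 2 - k) = qBinom q (M + 1) k * qInt q (M + 2) := by
  have h1 : M + 2 - k = (M + 1 - k) + 1 := by omega
  have h2 : qFact q (M + 2) = qFact q (M + 1) * qInt q (M + 2) := rfl
  have h3 : qFact q (M + 2 - k) = qFact q (M + 1 - k) * qInt q (M + 2 - k) := by
    rw [h1]; rfl
  have hne : qInt q (M + 2 - k) ≠ 0 := (qInt_pos hq (by omega)).ne'
  have hf1 : qFact q k ≠ 0 := (qFact_pos hq k).ne'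
  have hf2 : qFact q (M + 1 - k) ≠ 0 := (qFact_pos hq _).ne'
  unfold qBinom
  rw [h2, h3]
  field_simp

lemma key_basis {q x : ℝ} (hq : 0 < q) (hx : x ∈ Set.Icc (0:ℝ) 1) {M k : ℕ} (hk : k ≤ M + 1) :
    (1 - x) * lupasB q (M + 1) k (vq q x) =
      q ^ k * qInt q (M + 2 - k) / qInt q (M + 2) * lupasB q (M + 2) k x := by
  set s : ℝ := 1 - x + q * x with hs
  have hs0 : 0 < s := by simpa using factor_pos hq hx 1
  have hv : vq q x = q * x / s := rfl
  have hfac : ∀ j : ℕ, (1 - vq q x + q ^ (j + 1) * vq q x) * s = 1 - x + q ^ (j + 2) * x := by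
    intro j
    rw [hv]
    field_simp
    ring
  have hprod : ∏ j ∈ Finset.range M, (1 - vq q x + q ^ (j + 1) * vq q x)
      = (∏ j ∈ Finset.range M, (1 - x + q ^ (j + 2) * x)) / s ^ M := by
    rw [eq_div_iff (pow_ne_zero M hs0.ne'), ← Finset.card_range M, ← Finset.prod_const,
      Finset.card_range, ← Finset.prod_mul_distrib]
    exact Finset.prod_congr rfl fun j _ => hfac j
  have hbig : ∏ j ∈ Finset.range (M + 1), (1 - x + q ^ (j + 1) * x)
      = (∏ j ∈ Finset.range M, (1 - x + q ^ (j + 2) * x)) * s := by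
    rw [Finset.prod_range_succ']
    simp [hs]
  have hP : 0 < ∏ j ∈ Finset.range M, (1 - x + q ^ (j + 2) * x) :=
    Finset.prod_pos fun j _ => factor_pos hq hx (j + 2)
  set P : ℝ := ∏ j ∈ Finset.range M, (1 - x + q ^ (j + 2) * x)
  have hA : qInt q (M + 2) ≠ 0 := (qInt_pos hq (by omega)).ne'
  have hqb : qBinom q (M + 1) k = qBinom q (M + 2) k * qInt q (M + 2 - k) / qInt q (M + 2) := by
    rw [qBinom_step hq hk]
    field_simp
  unfold lupasB
  simp only [show M + 1 - 1 = M from rfl, show M + 2 - 1 = M + 1 from rfl]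
  rw [hprod, hbig, hqb]
  have h1v' : 1 - vq q x = (1 - x) / s := by
    rw [hv]
    field_simp
    rw [hs]
    ring
  rw [h1v', hv]
  have hMk : M + 2 - k = (M + 1 - k) + 1 := by omega
  rw [hMk, pow_succ, div_pow, div_pow]
  rw [div_div_eq_mul_div, mul_pow]
  have hse : s ^ k * s ^ (M + 1 - k) = s ^ M * s := by
    rw [← pow_add, show k + (M + 1 - k) = M + 1 by omega, pow_succ]
  clear_value s P
  field_simp
  linear_combination (-1 * qBinom q (M + 2) k * qInt q (M + 1 - k + 1) *
    x ^ k * (1 - x) ^ (M + 1 - k) * (1 - x)) * hse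

lemma scalar_step {q : ℝ} (hq : 0 < q) {M k : ℕ} (hk : k ≤ M + 1) (m : ℕ) :
    (qInt q (M + 1) / qInt q (M + 2)) ^ m * (qInt q k / qInt q (M + 1)) ^ m *
      (q ^ k * qInt q (M + 2 - k) / qInt q (M + 2)) =
    (qInt q k / qInt q (M + 2)) ^ m - (qInt q k / qInt q (M + 2)) ^ (m + 1) := by
  have hA : qInt q (M + 2) ≠ 0 := (qInt_pos hq (by omega)).ne'
  have hB : qInt q (M + 1) ≠ 0 := (qInt_pos hq (by omega)).ne'
  have hKC : qInt q k + q ^ k * qInt q (M + 2 - k) = qInt q (M + 2) := by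
    rw [← qInt_add, show k + (M + 2 - k) = M + 2 by omega]
  have h1 : (qInt q (M + 1) / qInt q (M + 2)) ^ m * (qInt q k / qInt q (M + 1)) ^ m
      = (qInt q k / qInt q (M + 2)) ^ m := by
    rw [← mul_pow, div_mul_div_comm, mul_comm (qInt q (M+1)), mul_div_mul_right _ _ hB]
  rw [h1, pow_succ]
  have h2 : q ^ k * qInt q (M + 2 - k) / qInt q (M + 2) = 1 - qInt q k / qInt q (M + 2) := by
    field_simp
    linarith [hKC]
  rw [h2]
  ring

theorem lupasR_recurrence (q : ℝ) (hq : 0 < q) (n : ℕ) (hn : 2 ≤ n) (m : ℕ)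
    (x : ℝ) (hx : x ∈ Set.Icc (0:ℝ) 1) :
    lupasR q n (fun t => t ^ (m + 1)) x =
      lupasR q n (fun t => t ^ m) x -
        (1 - x) * (qInt q (n - 1) / qInt q n) ^ m *
          lupasR q (n - 1) (fun t => t ^ m) (vq q x) := by
  obtain ⟨M, rfl⟩ : ∃ M, n = M + 2 := ⟨n - 2, by omega⟩
  simp only [show M + 2 - 1 = M + 1 from rfl]
  unfold lupasR
  rw [Finset.mul_sum]
  rw [Finset.sum_range_succ (n := M + 2), Finset.sum_range_succ (n := M + 2)
    (f := fun k => (qInt q k / qInt q (M + 2)) ^ m * lupasB q (M + 2) k x)]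
  have hA : qInt q (M + 2) ≠ 0 := (qInt_pos hq (by omega)).ne'
  have hone : qInt q (M + 2) / qInt q (M + 2) = 1 := div_self hA
  rw [hone]
  simp only [one_pow]
  have key : ∀ k ∈ Finset.range (M + 2),
      (1 - x) * (qInt q (M + 1) / qInt q (M + 2)) ^ m *
        ((fun t => t ^ m) (qInt q k / qInt q (M + 1)) * lupasB q (M + 1) k (vq q x))
      = (qInt q k / qInt q (M + 2)) ^ m * lupasB q (M + 2) k x
        - (qInt q k / qInt q (M + 2)) ^ (m + 1) * lupasB q (M + 2) k x := by
    intro k hkm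
    have hk : k ≤ M + 1 := by
      have := Finset.mem_range.mp hkm
      omega
    have h1 := key_basis hq hx (M := M) (k := k) hk
    have h2 := scalar_step hq (M := M) (k := k) hk m
    simp only
    linear_combination ((qInt q (M + 1) / qInt q (M + 2)) ^ m *
      (qInt q k / qInt q (M + 1)) ^ m) * h1 + (lupasB q (M + 2) k x) * h2
  rw [Finset.sum_congr rfl key, Finset.sum_sub_distrib]
  ring
end
end

section
/- For every q with 0 < q < 1, every integer n ≥ 1 and every x ∈ [0,1]: L_{n,q}(t²,x) = (q^n/[n]_q) · x(1 − v(q,x)), where t² denotes the function t ↦ t² on [0,1]. -/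
open Finset Filter

noncomputable section

set_option maxHeartbeats 1000000

namespace LupasAux

open Topology

variable {q : ℝ}


variable {q : ℝ}

lemma qFact_succ (n : ℕ) : qFact q (n + 1) = qFact q n * qInt q (n + 1) := rfl

lemma qFact_zero : qFact q 0 = 1 := rfl

lemma qInt_pos (hq0 : 0 < q) {n : ℕ} (hn : n ≠ 0) : 0 < qInt q n := by
  apply Finset.sum_pos (fun i _ => pow_pos hq0 i)
  simpa [Finset.nonempty_range_iff] using hn

lemma qFact_pos (hq0 : 0 < q) (n : ℕ) : 0 < qFact q n := by
  induction n with
  | zero => norm_num [qFact_zero]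
  | succ n ih => exact mul_pos ih (qInt_pos hq0 n.succ_ne_zero)

lemma qInt_eq (hq : q ≠ 1) (n : ℕ) : qInt q n = (1 - q ^ n) / (1 - q) := by
  have h1 : q - 1 ≠ 0 := sub_ne_zero.2 hq
  have h2 : (1 : ℝ) - q ≠ 0 := fun h => h1 (by linarith [h])
  rw [qInt, geom_sum_eq hq]
  field_simp
  ring

lemma qInt_add (a b : ℕ) : qInt q (a + b) = qInt q a + q ^ a * qInt q b := by
  unfold qInt
  rw [Finset.sum_range_add, Finset.mul_sum]
  congr 1
  exact Finset.sum_congr rfl fun i _ => (pow_add q a i)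

lemma qBinom_zero (hq0 : 0 < q) (n : ℕ) : qBinom q n 0 = 1 := by
  unfold qBinom
  rw [Nat.sub_zero, qFact_zero, one_mul, div_self (qFact_pos hq0 n).ne']

lemma qBinom_self (hq0 : 0 < q) (n : ℕ) : qBinom q n n = 1 := by
  unfold qBinom
  rw [Nat.sub_self, qFact_zero, mul_one, div_self (qFact_pos hq0 n).ne']

lemma qBinom_pascal (hq0 : 0 < q) {n k : ℕ} (h : k < n) :
    qBinom q (n + 1) (k + 1) = qBinom q n (k + 1) + q ^ (n - k) * qBinom q n k := by
  obtain ⟨m, rfl⟩ : ∃ m, n = k + 1 + m := ⟨n - (k + 1), by omega⟩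
  have e1 : k + 1 + m - k = m + 1 := by omega
  have e2 : k + 1 + m + 1 - (k + 1) = m + 1 := by omega
  have e3 : k + 1 + m - (k + 1) = m := by omega
  rw [qBinom, qBinom, qBinom, e1, e2, e3]
  have hI : qInt q (k + 1 + m + 1) = qInt q (m + 1) + q ^ (m + 1) * qInt q (k + 1) := by
    have : k + 1 + m + 1 = (m + 1) + (k + 1) := by omega
    rw [this, qInt_add]
  have h1 : qFact q (k + 1 + m + 1) = qFact q (k + 1 + m) * qInt q (k + 1 + m + 1) := qFact_succ _
  have h2 : qFact q (m + 1) = qFact q m * qInt q (m + 1) := qFact_succ _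
  have h3 : qFact q (k + 1) = qFact q k * qInt q (k + 1) := qFact_succ _
  rw [h1, h2, h3, hI]
  have p1 := qFact_pos hq0 (k + 1 + m)
  have p2 := qFact_pos hq0 m
  have p3 := qFact_pos hq0 k
  have p4 := qInt_pos hq0 (Nat.succ_ne_zero m)
  have p5 := qInt_pos hq0 (Nat.succ_ne_zero k)
  field_simp

lemma tri_succ (k : ℕ) : (k + 1) * ((k + 1) - 1) / 2 = k * (k - 1) / 2 + k :=
  Nat.triangle_succ k

lemma gauss (hq0 : 0 < q) (u v : ℝ) (n : ℕ) :
    ∏ j ∈ Finset.range n, (u + q ^ j * v)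
      = ∑ k ∈ Finset.range (n + 1),
          qBinom q n k * q ^ (k * (k - 1) / 2) * v ^ k * u ^ (n - k) := by
  induction n with
  | zero => simp [qBinom, qFact_zero]
  | succ n ih =>
    rw [Finset.prod_range_succ, ih, Finset.sum_range_succ' (n := n + 1), mul_add]
    rw [Finset.sum_mul, Finset.sum_mul, Finset.sum_range_succ'
      (f := fun k => qBinom q n k * q ^ (k * (k - 1) / 2) * v ^ k * u ^ (n - k) * u),
      Finset.sum_range_succ
      (f := fun k => qBinom q n k * q ^ (k * (k - 1) / 2) * v ^ k * u ^ (n - k) * (q ^ n * v)),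
      Finset.sum_range_succ
      (f := fun k => qBinom q (n + 1) (k + 1) * q ^ ((k + 1) * ((k + 1) - 1) / 2)
          * v ^ (k + 1) * u ^ (n + 1 - (k + 1)))]
    have hb0 : qBinom q (n + 1) 0 * q ^ (0 * (0 - 1) / 2) * v ^ 0 * u ^ (n + 1 - 0)
        = qBinom q n 0 * q ^ (0 * (0 - 1) / 2) * v ^ 0 * u ^ (n - 0) * u := by
      rw [qBinom_zero hq0, qBinom_zero hq0]
      simp [pow_succ]
    have hbn : qBinom q (n + 1) (n + 1) * q ^ ((n + 1) * ((n + 1) - 1) / 2)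
          * v ^ (n + 1) * u ^ (n + 1 - (n + 1))
        = qBinom q n n * q ^ (n * (n - 1) / 2) * v ^ n * u ^ (n - n) * (q ^ n * v) := by
      rw [qBinom_self hq0, qBinom_self hq0, tri_succ, Nat.sub_self, Nat.sub_self, pow_add]
      ring
    have hmid : ∀ k ∈ Finset.range n,
        qBinom q (n + 1) (k + 1) * q ^ ((k + 1) * ((k + 1) - 1) / 2)
          * v ^ (k + 1) * u ^ (n + 1 - (k + 1))
        = qBinom q n (k + 1) * q ^ ((k + 1) * ((k + 1) - 1) / 2) * v ^ (k + 1)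
            * u ^ (n - (k + 1)) * u
          + qBinom q n k * q ^ (k * (k - 1) / 2) * v ^ k * u ^ (n - k) * (q ^ n * v) := by
      intro k hk
      rw [Finset.mem_range] at hk
      have e1 : n + 1 - (k + 1) = (n - (k + 1)) + 1 := by omega
      have e2 : n - k = (n - (k + 1)) + 1 := by omega
      have e3 : q ^ ((n - (k + 1)) + 1) * q ^ k = q ^ n := by rw [← pow_add]; congr 1; omega
      rw [qBinom_pascal hq0 hk, tri_succ, e1, e2, ← e3]
      simp only [pow_add, pow_succ, pow_zero]
      ring
    rw [Finset.sum_congr rfl hmid, Finset.sum_add_distrib]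
    rw [hb0, hbn]
    ring


variable {q : ℝ}

lemma factor_pos (hq0 : 0 < q) {x : ℝ} (hx0 : 0 ≤ x) (hx1 : x ≤ 1) (j : ℕ) :
    0 < 1 - x + q ^ j * x := by
  rcases eq_or_lt_of_le hx0 with h | h
  · simp [← h]
  · have := pow_pos hq0 j
    nlinarith

lemma sum_w (hq0 : 0 < q) (x : ℝ) (n r : ℕ) :
    ∑ k ∈ Finset.range (n + 1),
        (q ^ r) ^ k * (qBinom q n k * q ^ (k * (k - 1) / 2) * x ^ k * (1 - x) ^ (n - k))
      = ∏ j ∈ Finset.range n, (1 - x + q ^ (j + r) * x) := by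
  have h := gauss hq0 (1 - x) (q ^ r * x) n
  have hL : ∀ j, (1 - x) + q ^ j * (q ^ r * x) = 1 - x + q ^ (j + r) * x := by
    intro j; rw [pow_add]; ring
  rw [Finset.prod_congr rfl fun j _ => hL j] at h
  rw [h]
  refine Finset.sum_congr rfl fun k _ => ?_
  rw [mul_pow]
  ring

lemma lupasR_sq (hq0 : 0 < q) (hq1 : q < 1) {n : ℕ} (hn : 1 ≤ n)
    {x : ℝ} (hx0 : 0 ≤ x) (hx1 : x ≤ 1) :
    lupasR q n (fun t => t ^ 2) x
      = (1 - 2 * (1 - x + q ^ n * x)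
          + (1 - x + q ^ n * x) * (1 - x + q ^ (n + 1) * x) / (1 - x + q * x))
        / (1 - q ^ n) ^ 2 := by
  obtain ⟨m, rfl⟩ : ∃ m, n = m + 1 := ⟨n - 1, by omega⟩
  set N : ℕ → ℝ := fun k =>
    qBinom q (m + 1) k * q ^ (k * (k - 1) / 2) * x ^ k * (1 - x) ^ (m + 1 - k) with hN
  set D : ℝ := ∏ j ∈ Finset.range m, (1 - x + q ^ (j + 1) * x) with hD
  have hDpos : 0 < D := Finset.prod_pos fun j _ => factor_pos hq0 hx0 hx1 (j + 1)
  have hC : 0 < 1 - x + q * x := by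
    have := factor_pos hq0 hx0 hx1 1; rwa [pow_one] at this
  have hqne : (1 : ℝ) - q ≠ 0 := by intro h; linarith [h]
  have hQ1 : q ^ (m + 1) < 1 := pow_lt_one₀ hq0.le hq1 (Nat.succ_ne_zero m)
  have hQne : (1 : ℝ) - q ^ (m + 1) ≠ 0 := by intro h; linarith [hQ1]
  -- values of the nodes
  have hval : ∀ k : ℕ, qInt q k / qInt q (m + 1) = (1 - q ^ k) / (1 - q ^ (m + 1)) := by
    intro k
    rw [qInt_eq hq1.ne, qInt_eq hq1.ne]
    field_simp
  -- the three product sums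
  have hP0 : ∑ k ∈ Finset.range (m + 2), N k = D := by
    have h := sum_w hq0 x (m + 1) 0
    simp only [pow_zero, one_pow, one_mul] at h
    rw [h, Finset.prod_range_succ' (fun j => 1 - x + q ^ (j + 0) * x) m]
    simp [hD]
  have hP1 : ∑ k ∈ Finset.range (m + 2), q ^ k * N k = D * (1 - x + q ^ (m + 1) * x) := by
    have h := sum_w hq0 x (m + 1) 1
    simp only [pow_one] at h
    rw [h, Finset.prod_range_succ]
  have hP2 : ∑ k ∈ Finset.range (m + 2), (q ^ k) ^ 2 * N k
      = D * (1 - x + q ^ (m + 1) * x) * (1 - x + q ^ (m + 2) * x) / (1 - x + q * x) := by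
    have h := sum_w hq0 x (m + 1) 2
    have hsw : ∀ k : ℕ, (q ^ k) ^ 2 = (q ^ 2) ^ k := by
      intro k; rw [← pow_mul, ← pow_mul, Nat.mul_comm]
    rw [Finset.sum_congr rfl (fun k _ => by rw [hsw k]), h, Finset.prod_range_succ]
    -- relate ∏_{j<m}(1-x+q^{j+2}x) to D
    have hshift : (1 - x + q * x) * ∏ j ∈ Finset.range m, (1 - x + q ^ (j + 2) * x)
        = D * (1 - x + q ^ (m + 1) * x) := by
      have h2 : ∏ j ∈ Finset.range (m + 1), (1 - x + q ^ (j + 1) * x)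
          = (∏ j ∈ Finset.range m, (1 - x + q ^ (j + 1 + 1) * x)) * (1 - x + q ^ (0 + 1) * x) :=
        Finset.prod_range_succ' (fun j => 1 - x + q ^ (j + 1) * x) m
      rw [Finset.prod_range_succ] at h2
      rw [← hD] at h2
      have hcg : (∏ j ∈ Finset.range m, (1 - x + q ^ (j + 1 + 1) * x))
          = ∏ j ∈ Finset.range m, (1 - x + q ^ (j + 2) * x) :=
        Finset.prod_congr rfl fun j _ => by norm_num
      rw [hcg] at h2
      rw [h2]
      simp only [pow_one, zero_add]
      ring
    rw [eq_div_iff hC.ne']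
    calc (∏ j ∈ Finset.range m, (1 - x + q ^ (j + 2) * x)) * (1 - x + q ^ (m + 2) * x)
        * (1 - x + q * x)
        = ((1 - x + q * x) * ∏ j ∈ Finset.range m, (1 - x + q ^ (j + 2) * x))
          * (1 - x + q ^ (m + 2) * x) := by ring
      _ = D * (1 - x + q ^ (m + 1) * x) * (1 - x + q ^ (m + 2) * x) := by rw [hshift]
  -- assemble
  have hrw : lupasR q (m + 1) (fun t => t ^ 2) x
      = (∑ k ∈ Finset.range (m + 2), (1 - q ^ k) ^ 2 * N k)
        / ((1 - q ^ (m + 1)) ^ 2 * D) := by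
    rw [lupasR, Finset.sum_div]
    refine Finset.sum_congr rfl fun k _ => ?_
    rw [hval k, lupasB]
    have : (m + 1 - 1 : ℕ) = m := by omega
    rw [this, ← hD]
    simp only [hN]
    rw [div_pow]
    field_simp
  rw [hrw]
  have hsplit : ∑ k ∈ Finset.range (m + 2), (1 - q ^ k) ^ 2 * N k
      = (∑ k ∈ Finset.range (m + 2), N k)
        - 2 * (∑ k ∈ Finset.range (m + 2), q ^ k * N k)
        + ∑ k ∈ Finset.range (m + 2), (q ^ k) ^ 2 * N k := by
    rw [Finset.mul_sum, ← Finset.sum_sub_distrib, ← Finset.sum_add_distrib]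
    refine Finset.sum_congr rfl fun k _ => ?_
    ring
  rw [hsplit, hP0, hP1, hP2]
  have e1 : (m + 1) + 1 = m + 2 := rfl
  rw [← e1]
  field_simp



/-- The Euler series term. -/
def cE (q : ℝ) (k : ℕ) (t : ℝ) : ℝ :=
  q ^ (k * (k - 1) / 2) * t ^ k / ((1 - q) ^ k * qFact q k)

lemma cE_zero (t : ℝ) : cE q 0 t = 1 := by simp [cE, qFact_zero]

lemma cE_nonneg (hq0 : 0 < q) (hq1 : q < 1) {t : ℝ} (ht : 0 ≤ t) (k : ℕ) : 0 ≤ cE q k t := by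
  have h1 : (0:ℝ) < 1 - q := by linarith
  exact div_nonneg (mul_nonneg (pow_nonneg hq0.le _) (pow_nonneg ht _))
    (mul_nonneg (pow_nonneg h1.le _) (qFact_pos hq0 k).le)

lemma cE_scale (a t : ℝ) (k : ℕ) : cE q k (a * t) = a ^ k * cE q k t := by
  rw [cE, cE, mul_pow]
  ring

lemma one_sub_pow_eq (hq : q ≠ 1) (k : ℕ) : (1 - q) * qInt q k = 1 - q ^ k := by
  have h2 : (1 : ℝ) - q ≠ 0 := sub_ne_zero.2 (Ne.symm hq)
  rw [qInt_eq hq]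
  field_simp

lemma cE_ratio (hq0 : 0 < q) (hq1 : q < 1) (k : ℕ) (t : ℝ) :
    cE q (k + 1) t = (q ^ k * t / (1 - q ^ (k + 1))) * cE q k t := by
  have h2 : (1 : ℝ) - q ≠ 0 := by intro h; linarith [h]
  have hIpos := qInt_pos hq0 (Nat.succ_ne_zero k)
  have hFpos := qFact_pos hq0 k
  have hpow : (1:ℝ) - q ^ (k+1) = (1 - q) * qInt q (k+1) := (one_sub_pow_eq hq1.ne (k+1)).symm
  rw [cE, cE, tri_succ, qFact_succ, hpow, pow_add, pow_succ]
  field_simp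
  ring

lemma one_sub_pow_pos (hq0 : 0 < q) (hq1 : q < 1) (k : ℕ) : 0 < 1 - q ^ (k + 1) := by
  have : q ^ (k + 1) < 1 := pow_lt_one₀ hq0.le hq1 (by omega)
  linarith

lemma summable_cE (hq0 : 0 < q) (hq1 : q < 1) {t : ℝ} (ht : 0 ≤ t) :
    Summable (fun k => cE q k t) := by
  have h1 : (0:ℝ) < 1 - q := by linarith
  apply summable_of_ratio_norm_eventually_le (r := 1/2) (by norm_num)
  have htend : Tendsto (fun k : ℕ => q ^ k * t / (1 - q)) atTop (𝓝 0) := by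
    have := (tendsto_pow_atTop_nhds_zero_of_lt_one hq0.le hq1).mul_const t
    simpa using this.div_const (1 - q)
  filter_upwards [htend.eventually (eventually_le_nhds (by norm_num : (0:ℝ) < 1/2))] with k hk
  have hnn := cE_nonneg hq0 hq1 ht k
  have hnn1 := cE_nonneg hq0 hq1 ht (k + 1)
  rw [Real.norm_eq_abs, Real.norm_eq_abs, abs_of_nonneg hnn, abs_of_nonneg hnn1,
    cE_ratio hq0 hq1 k t]
  have hb : q ^ k * t / (1 - q ^ (k + 1)) ≤ q ^ k * t / (1 - q) := by
    apply div_le_div_of_nonneg_left (mul_nonneg (pow_nonneg hq0.le k) ht) h1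
    have : q ^ (k + 1) ≤ q := by
      calc q ^ (k + 1) ≤ q ^ 1 := pow_le_pow_of_le_one hq0.le hq1.le (by omega)
        _ = q := pow_one q
    linarith
  exact mul_le_mul_of_nonneg_right (hb.trans hk) hnn

lemma cE_rec (hq0 : 0 < q) (hq1 : q < 1) (k : ℕ) (t : ℝ) :
    cE q (k + 1) t = cE q (k + 1) (q * t) + t * cE q k (q * t) := by
  have hne := (one_sub_pow_pos hq0 hq1 k).ne'
  rw [cE_scale, cE_scale, cE_ratio hq0 hq1 k t]
  field_simp
  ring

lemma E_rec (hq0 : 0 < q) (hq1 : q < 1) {t : ℝ} (ht : 0 ≤ t) :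
    (∑' k, cE q k t) = (1 + t) * ∑' k, cE q k (q * t) := by
  have hs := summable_cE hq0 hq1 ht
  have hsq := summable_cE hq0 hq1 (mul_nonneg hq0.le ht)
  have hsq1 : Summable (fun k => cE q (k + 1) (q * t)) := (summable_nat_add_iff 1).2 hsq
  have h1 : ∀ k : ℕ, cE q (k + 1) t = cE q (k + 1) (q * t) + t * cE q k (q * t) :=
    fun k => cE_rec hq0 hq1 k t
  rw [Summable.tsum_eq_zero_add hs, tsum_congr h1, Summable.tsum_add hsq1 (hsq.mul_left t), tsum_mul_left,
    cE_zero]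
  have h0 : (∑' b, cE q (b + 1) (q * t)) = (∑' k, cE q k (q * t)) - 1 := by
    rw [Summable.tsum_eq_zero_add hsq, cE_zero]; ring
  rw [h0]
  ring

lemma one_le_E (hq0 : 0 < q) (hq1 : q < 1) {t : ℝ} (ht : 0 ≤ t) : 1 ≤ ∑' k, cE q k t := by
  have := Summable.le_tsum (summable_cE hq0 hq1 ht) 0 (fun j _ => cE_nonneg hq0 hq1 ht j)
  rwa [cE_zero] at this

lemma E_prod (hq0 : 0 < q) (hq1 : q < 1) {s : ℝ} (hs : 0 ≤ s) (m : ℕ) :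
    (∏ j ∈ Finset.range m, (1 + q ^ j * s)) * (∑' k, cE q k (q ^ m * s))
      = ∑' k, cE q k s := by
  induction m with
  | zero => simp
  | succ m ih =>
    rw [Finset.prod_range_succ]
    have ht : 0 ≤ q ^ m * s := mul_nonneg (pow_nonneg hq0.le m) hs
    have h := E_rec hq0 hq1 ht
    have he : q * (q ^ m * s) = q ^ (m + 1) * s := by rw [pow_succ]; ring
    rw [he] at h
    rw [mul_assoc, ← h, ih]

lemma E_tendsto (hq0 : 0 < q) (hq1 : q < 1) {s : ℝ} (hs : 0 ≤ s) :
    Tendsto (fun m : ℕ => ∑' k, cE q k (q ^ m * s)) atTop (𝓝 1) := by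
  have hsum := summable_cE hq0 hq1 hs
  set c : ℝ := (∑' k, cE q k s) - 1 with hc
  have hupper : ∀ m : ℕ, (∑' k, cE q k (q ^ m * s)) ≤ 1 + q ^ m * c := by
    intro m
    have ht : 0 ≤ q ^ m * s := mul_nonneg (pow_nonneg hq0.le m) hs
    have hsm := summable_cE hq0 hq1 ht
    rw [Summable.tsum_eq_zero_add hsm, cE_zero]
    have hkey : ∀ k : ℕ, cE q (k + 1) (q ^ m * s) ≤ q ^ m * cE q (k + 1) s := by
      intro k
      rw [cE_scale]
      have h1 : (q ^ m) ^ (k + 1) ≤ q ^ m := by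
        calc (q ^ m) ^ (k + 1) ≤ (q ^ m) ^ 1 :=
            pow_le_pow_of_le_one (pow_nonneg hq0.le m)
              (pow_le_one₀ hq0.le hq1.le) (by omega)
          _ = q ^ m := pow_one _
      exact mul_le_mul_of_nonneg_right h1 (cE_nonneg hq0 hq1 hs (k + 1))
    have hle := Summable.tsum_le_tsum hkey ((summable_nat_add_iff 1).2 hsm)
      (((summable_nat_add_iff 1).2 hsum).mul_left (q ^ m))
    rw [tsum_mul_left] at hle
    have htail : (∑' k, cE q (k + 1) s) = c := by
      have := Summable.tsum_eq_zero_add hsum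
      rw [cE_zero] at this
      rw [hc, this]; ring
    rw [htail] at hle
    linarith
  have hlower : ∀ m : ℕ, (1:ℝ) ≤ ∑' k, cE q k (q ^ m * s) := fun m =>
    one_le_E hq0 hq1 (mul_nonneg (pow_nonneg hq0.le m) hs)
  have htu : Tendsto (fun m : ℕ => 1 + q ^ m * c) atTop (𝓝 1) := by
    have := ((tendsto_pow_atTop_nhds_zero_of_lt_one hq0.le hq1).mul_const c).const_add 1
    simpa using this
  exact tendsto_of_tendsto_of_tendsto_of_le_of_le tendsto_const_nhds htu hlower hupper

lemma euler_hasProd (hq0 : 0 < q) (hq1 : q < 1) {s : ℝ} (hs : 0 ≤ s) :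
    HasProd (fun j : ℕ => 1 + q ^ j * s) (∑' k, cE q k s) := by
  set f : ℕ → ℝ := fun j => 1 + q ^ j * s with hf
  have hf1 : ∀ j, 1 ≤ f j := fun j => by
    have := mul_nonneg (pow_nonneg hq0.le j) hs
    simp [hf]; linarith
  have hfnn : ∀ j, 0 ≤ f j := fun j => le_trans zero_le_one (hf1 j)
  have hmono : Monotone (fun F : Finset ℕ => ∏ j ∈ F, f j) := by
    intro F G h
    dsimp only
    rw [← Finset.prod_sdiff h]
    have h1 : (1:ℝ) ≤ ∏ j ∈ G \ F, f j := by
      rw [show (1:ℝ) = ∏ _j ∈ G \ F, (1:ℝ) by rw [Finset.prod_const_one]]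
      exact Finset.prod_le_prod (fun i _ => zero_le_one) (fun i _ => hf1 i)
    exact le_mul_of_one_le_left (Finset.prod_nonneg fun i _ => hfnn i) h1
  have hrange : ∀ m : ℕ, (∏ j ∈ Finset.range m, f j) ≤ ∑' k, cE q k s := by
    intro m
    have h := E_prod hq0 hq1 hs m
    have h1 := one_le_E hq0 hq1 (mul_nonneg (pow_nonneg hq0.le m) hs)
    nlinarith [Finset.prod_nonneg (fun j (_ : j ∈ Finset.range m) => hfnn j)]
  have hbdd : BddAbove (Set.range fun F : Finset ℕ => ∏ j ∈ F, f j) := by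
    refine ⟨∑' k, cE q k s, ?_⟩
    rintro y ⟨F, rfl⟩
    obtain ⟨m, hm⟩ := F.exists_nat_subset_range
    exact (hmono hm).trans (hrange m)
  have hlub : IsLUB (Set.range fun F : Finset ℕ => ∏ j ∈ F, f j)
      (sSup (Set.range fun F : Finset ℕ => ∏ j ∈ F, f j)) :=
    isLUB_csSup (Set.range_nonempty _) hbdd
  have hprod : HasProd f (sSup (Set.range fun F : Finset ℕ => ∏ j ∈ F, f j)) :=
    tendsto_atTop_isLUB hmono hlub
  have h1 : Tendsto (fun m : ℕ => ∏ j ∈ Finset.range m, f j) atTop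
      (𝓝 (sSup (Set.range fun F : Finset ℕ => ∏ j ∈ F, f j))) := hprod.tendsto_prod_nat
  have h2 : Tendsto (fun m : ℕ => ∏ j ∈ Finset.range m, f j) atTop (𝓝 (∑' k, cE q k s)) := by
    have hEm : ∀ m : ℕ, (∏ j ∈ Finset.range m, f j)
        = (∑' k, cE q k s) / (∑' k, cE q k (q ^ m * s)) := by
      intro m
      have hpos : (0:ℝ) < ∑' k, cE q k (q ^ m * s) :=
        lt_of_lt_of_le zero_lt_one (one_le_E hq0 hq1 (mul_nonneg (pow_nonneg hq0.le m) hs))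
      rw [eq_div_iff hpos.ne']
      exact E_prod hq0 hq1 hs m
    rw [show (fun m : ℕ => ∏ j ∈ Finset.range m, f j)
        = fun m => (∑' k, cE q k s) / (∑' k, cE q k (q ^ m * s)) from funext hEm]
    have := (tendsto_const_nhds (x := ∑' k, cE q k s) (f := atTop (α := ℕ))).div
      (E_tendsto hq0 hq1 hs) one_ne_zero
    simpa [Pi.div_def] using this
  rwa [tendsto_nhds_unique h1 h2] at hprod

lemma lupasRInf_sq (hq0 : 0 < q) (hq1 : q < 1) {x : ℝ} (hx0 : 0 ≤ x) (hx1 : x < 1) :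
    lupasRInf q (fun t => t ^ 2) x
      = 1 - 2 * (1 - x) + (1 - x) ^ 2 / (1 - x + q * x) := by
  have hx' : (0:ℝ) < 1 - x := by linarith
  set s : ℝ := x / (1 - x) with hsdef
  have hs : 0 ≤ s := div_nonneg hx0 hx'.le
  have hqs : 0 ≤ q * s := mul_nonneg hq0.le hs
  have hP := (euler_hasProd hq0 hq1 hs).tprod_eq
  rw [lupasRInf, if_neg (by linarith : ¬ 1 < q), lupasRInfLow, if_neg hx1.ne]
  have hb : ∀ k, lupasBInf q k x = cE q k s / (∑' k, cE q k s) := by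
    intro k
    rw [lupasBInf, ← hsdef, hP, cE, div_div]
  have hterm : ∀ k : ℕ, (fun t : ℝ => t ^ 2) (1 - q ^ k) * lupasBInf q k x
      = (cE q k s - 2 * cE q k (q * s) + cE q k (q ^ 2 * s)) / (∑' k, cE q k s) := by
    intro k
    rw [hb k]
    have h1 : cE q k (q * s) = q ^ k * cE q k s := cE_scale q s k
    have h2 : cE q k (q ^ 2 * s) = (q ^ k) ^ 2 * cE q k s := by
      rw [cE_scale]
      congr 1
      rw [← pow_mul, ← pow_mul, Nat.mul_comm]
    rw [h1, h2]
    ring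
  rw [tsum_congr hterm]
  have hsum0 := summable_cE hq0 hq1 hs
  have hsum1 := summable_cE hq0 hq1 hqs
  have hsum2 := summable_cE hq0 hq1 (mul_nonneg (by positivity : (0:ℝ) ≤ q ^ 2) hs)
  have hcomb : Summable (fun k => cE q k s - 2 * cE q k (q * s)) :=
    hsum0.sub (hsum1.mul_left 2)
  rw [tsum_div_const, Summable.tsum_add hcomb hsum2, Summable.tsum_sub hsum0 (hsum1.mul_left 2), tsum_mul_left]
  -- use recurrences
  have hE1 : (∑' k, cE q k s) = (1 + s) * ∑' k, cE q k (q * s) := E_rec hq0 hq1 hs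
  have hE2 : (∑' k, cE q k (q * s)) = (1 + q * s) * ∑' k, cE q k (q ^ 2 * s) := by
    have h := E_rec hq0 hq1 hqs
    have he : q * (q * s) = q ^ 2 * s := by ring
    rwa [he] at h
  have hpos2 : (0:ℝ) < ∑' k, cE q k (q ^ 2 * s) :=
    lt_of_lt_of_le zero_lt_one (one_le_E hq0 hq1 (mul_nonneg (by positivity) hs))
  have h1s : (0:ℝ) < 1 + s := by linarith
  have h1qs : (0:ℝ) < 1 + q * s := by linarith
  rw [hE1, hE2]
  have hC : (0:ℝ) < 1 - x + q * x := by nlinarith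
  have hsx : (1 - x) * s = x := by rw [hsdef]; field_simp
  have h1s' : 1 + s = 1 / (1 - x) := by rw [hsdef]; field_simp; ring
  have h1qs' : 1 + q * s = (1 - x + q * x) / (1 - x) := by
    rw [hsdef]; field_simp
  rw [h1s', h1qs']
  field_simp


end LupasAux

theorem lupasL_second_moment (q : ℝ) (hq0 : 0 < q) (hq1 : q < 1) (n : ℕ) (hn : 1 ≤ n)
    (x : ℝ) (hx : x ∈ Set.Icc (0:ℝ) 1) :
    lupasL q n (fun t => t ^ 2) x = q ^ n / qInt q n * (x * (1 - vq q x)) := by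
  obtain ⟨hx0, hx1⟩ := hx
  have hqne : (1 : ℝ) - q ≠ 0 := by intro h; linarith
  have hQ1 : q ^ n < 1 := pow_lt_one₀ hq0.le hq1 (by omega)
  have hQne : (1 : ℝ) - q ^ n ≠ 0 := by intro h; linarith
  have hC : (0 : ℝ) < 1 - x + q * x := by
    have := LupasAux.factor_pos hq0 hx0 hx1 1
    rwa [pow_one] at this
  have hR := LupasAux.lupasR_sq hq0 hq1 hn hx0 hx1
  rw [lupasL, hR, vq, LupasAux.qInt_eq hq1.ne]
  rcases eq_or_lt_of_le hx1 with h1 | h1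
  · subst h1
    rw [lupasRInf, if_neg (by linarith : ¬ 1 < q), lupasRInfLow, if_pos rfl]
    field_simp
    ring
  · rw [LupasAux.lupasRInf_sq hq0 hq1 hx0 h1]
    field_simp
    ring
end
end
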